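/- arXiv:1305.6124 — 5 statements merged into one kernel-verified Lean document; each statement's English description precedes it below -/
import Mathlib

section
/- Let Φ : ℝ → ℂ be continuous and 1-periodic, and let α ∈ ℝ. Then there exists a continuous 1-periodic function Ψ : ℝ → ℂ such that for all x, the derivative of x ↦ i·Ψ(x)·e^{iαx} equals (1 − e^{iα})·Φ(x)·e^{iαx}. -/
open Complex

theorem stmt0 (Φ : ℝ → ℂ) (hΦc : Continuous Φ) (hΦp : ∀ x, Φ (x + 1) = Φ x) (α : ℝ) :
    ∃ Ψ : ℝ → ℂ, Continuous Ψ ∧ (∀ x, Ψ (x + 1) = Ψ x) ∧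
      ∀ x : ℝ, HasDerivAt (fun y : ℝ => Complex.I * Ψ y * Complex.exp (Complex.I * α * y))
        ((1 - Complex.exp (Complex.I * α)) * Φ x * Complex.exp (Complex.I * α * x)) x := by
  set c : ℂ := Complex.exp (Complex.I * α) with hc_def
  by_cases hc : c = 1
  · refine ⟨0, continuous_const, fun x => rfl, fun x => ?_⟩
    have h := hasDerivAt_const x (0 : ℂ)
    simpa [← hc_def, hc] using h
  · set f : ℝ → ℂ := fun t => (1 - c) * Φ t * Complex.exp (Complex.I * α * t) with hf_def
    have hexp : ∀ x : ℝ, Complex.exp (Complex.I * α * (x + 1)) =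
        Complex.exp (Complex.I * α * x) * c := by
      intro x
      rw [hc_def, ← Complex.exp_add]
      ring_nf
    have hfp : ∀ x : ℝ, f (x + 1) = c * f x := by
      intro x
      simp only [hf_def]
      rw [hΦp]
      push_cast
      rw [hexp]
      ring
    have hfc : Continuous f := by
      apply Continuous.mul
      · exact continuous_const.mul hΦc
      · exact Complex.continuous_exp.comp (by continuity)
    set F : ℝ → ℂ := fun x => ∫ t in (0:ℝ)..x, f t with hF_def
    have hF : ∀ x : ℝ, HasDerivAt F (f x) x := fun x =>
      intervalIntegral.integral_hasDerivAt_right (hfc.intervalIntegrable 0 x)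
        (hfc.stronglyMeasurableAtFilter _ _) hfc.continuousAt
    have hFc : Continuous F :=
      continuous_iff_continuousAt.mpr fun x => (hF x).continuousAt
    -- G x = F (x+1) - c * F x is constant
    set G : ℝ → ℂ := fun x => F (x + 1) - c * F x with hG_def
    have hG' : ∀ x : ℝ, HasDerivAt G 0 x := by
      intro x
      have hadd : HasDerivAt (fun y : ℝ => y + 1) 1 x := (hasDerivAt_id' x).add_const 1
      have h1 := HasDerivAt.scomp x (hF (x + 1)) hadd
      have h2 : HasDerivAt (fun y : ℝ => c * F y) (c * f x) x := (hF x).const_mul c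
      have h3 := h1.sub h2
      have hval : (1:ℝ) • f (x + 1) - c * f x = 0 := by rw [one_smul, hfp x]; ring
      rw [hval] at h3
      exact h3
    have hGdiff : Differentiable ℝ G := fun x => (hG' x).differentiableAt
    have hGderiv : ∀ x, deriv G x = 0 := fun x => (hG' x).deriv
    have hGconst : ∀ x : ℝ, G x = G 0 := fun x =>
      is_const_of_deriv_eq_zero hGdiff hGderiv x 0
    have hF0 : F 0 = 0 := intervalIntegral.integral_same
    have hG0 : G 0 = F 1 := by simp [hG_def, hF0]
    set C : ℂ := F 1 / (c - 1) with hC_def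
    have hc1 : c - 1 ≠ 0 := sub_ne_zero.mpr hc
    have hshift : ∀ x : ℝ, F (x + 1) + C = c * (F x + C) := by
      intro x
      have h1 : F (x + 1) = F 1 + c * F x := by
        have := hGconst x
        rw [hG0] at this
        simp only [hG_def] at this
        linear_combination this
      rw [h1, hC_def]
      field_simp
      ring
    set Ψ : ℝ → ℂ := fun x => -Complex.I * (F x + C) / Complex.exp (Complex.I * α * x)
      with hΨ_def
    have hΨc : Continuous Ψ := by
      apply Continuous.div
      · exact continuous_const.mul (hFc.add continuous_const)
      · exact Complex.continuous_exp.comp (by continuity)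
      · intro x; exact Complex.exp_ne_zero _
    have hΨp : ∀ x : ℝ, Ψ (x + 1) = Ψ x := by
      intro x
      simp only [hΨ_def]
      rw [hshift x]
      push_cast
      rw [hexp x]
      field_simp [hc_def]
    have hkey : (fun y : ℝ => Complex.I * Ψ y * Complex.exp (Complex.I * α * y)) =
        fun y : ℝ => F y + C := by
      funext y
      simp only [hΨ_def]
      field_simp
      ring_nf
      simp [Complex.I_sq]
    refine ⟨Ψ, hΨc, hΨp, fun x => ?_⟩
    rw [hkey]
    exact (hF x).add_const C
end

section
/- Let Φ : ℝ → ℂ be given by a finite Fourier sum Φ(x) = Σ_{n=−N}^{N} c_n · e^{2πinx}, and let α ∈ ℝ with 2πn + α ≠ 0 for all |n| ≤ N. Define Q_α(x) = ∫₀ˣ Φ(t)e^{iαt} dt and Ψ(x) = −i·Q_α(x)·e^{−iαx}·(1 − e^{iα}) + i·Q_α(1)·e^{−iαx}. Then Ψ(x) = Σ_{n=−N}^{N} (−c_n·(1 − e^{iα})/(2πn + α)) · e^{2πinx}. -/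
open Complex

theorem stmt7 (N : ℕ) (c : ℤ → ℂ) (α : ℝ)
    (hα : ∀ n : ℤ, |n| ≤ (N : ℤ) → 2 * Real.pi * n + α ≠ 0)
    (Φ : ℝ → ℂ)
    (hΦ : ∀ x : ℝ, Φ x = ∑ n ∈ Finset.Icc (-(N:ℤ)) (N:ℤ),
      c n * Complex.exp (2 * Real.pi * Complex.I * n * x))
    (Q : ℝ → ℂ) (hQ : ∀ x : ℝ, Q x = ∫ t in (0:ℝ)..x, Φ t * Complex.exp (Complex.I * α * t))
    (Ψ : ℝ → ℂ)
    (hΨ : ∀ x : ℝ, Ψ x = -Complex.I * Q x * Complex.exp (-(Complex.I * α * x)) *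
        (1 - Complex.exp (Complex.I * α)) + Complex.I * Q 1 * Complex.exp (-(Complex.I * α * x))) :
    ∀ x : ℝ, Ψ x = ∑ n ∈ Finset.Icc (-(N:ℤ)) (N:ℤ),
      (-(c n * (1 - Complex.exp (Complex.I * α)) / ((2 * Real.pi * n + α : ℝ) : ℂ))) *
        Complex.exp (2 * Real.pi * Complex.I * n * x) := by
  intro x
  set S := Finset.Icc (-(N:ℤ)) (N:ℤ) with hS
  have hd : ∀ n ∈ S, ((2 * Real.pi * n + α : ℝ) : ℂ) ≠ 0 := by
    intro n hn
    simp only [hS, Finset.mem_Icc] at hn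
    exact_mod_cast Complex.ofReal_ne_zero.mpr (hα n (abs_le.mpr hn))
  have hβne : ∀ n ∈ S, Complex.I * ((2 * Real.pi * n + α : ℝ) : ℂ) ≠ 0 := fun n hn =>
    mul_ne_zero Complex.I_ne_zero (hd n hn)
  have hQ' : ∀ y : ℝ, Q y = ∑ n ∈ S, c n *
      ((Complex.exp (Complex.I * ((2 * Real.pi * n + α : ℝ) : ℂ) * y) - 1) /
        (Complex.I * ((2 * Real.pi * n + α : ℝ) : ℂ))) := by
    intro y
    rw [hQ]
    have key : ∀ t : ℝ, Φ t * Complex.exp (Complex.I * α * t) =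
        ∑ n ∈ S, c n * Complex.exp (Complex.I * ((2 * Real.pi * n + α : ℝ) : ℂ) * t) := by
      intro t
      rw [hΦ, Finset.sum_mul]
      refine Finset.sum_congr rfl fun n _ => ?_
      rw [mul_assoc, ← Complex.exp_add]
      congr 1
      push_cast
      ring
    simp_rw [key]
    rw [intervalIntegral.integral_finset_sum (fun n _ => by
      apply Continuous.intervalIntegrable
      exact continuous_const.mul (Complex.continuous_exp.comp (by continuity)))]
    refine Finset.sum_congr rfl fun n hn => ?_
    rw [intervalIntegral.integral_const_mul,
      integral_exp_mul_complex (hβne n hn)]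
    simp
  rw [hΨ, hQ' x, hQ' 1]
  simp_rw [Finset.mul_sum, Finset.sum_mul, ← Finset.sum_add_distrib]
  refine Finset.sum_congr rfl fun n hn => ?_
  have hsplit : Complex.exp (Complex.I * ((2 * Real.pi * n + α : ℝ) : ℂ) * x) =
      Complex.exp (2 * Real.pi * Complex.I * n * x) * Complex.exp (Complex.I * α * x) := by
    rw [← Complex.exp_add]; congr 1; push_cast; ring
  have hone : Complex.exp (Complex.I * ((2 * Real.pi * n + α : ℝ) : ℂ) * ((1:ℝ):ℂ)) =
      Complex.exp (Complex.I * α) := by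
    have h1 : Complex.I * ((2 * Real.pi * n + α : ℝ) : ℂ) * ((1:ℝ):ℂ) =
        (n : ℂ) * (2 * Real.pi * Complex.I) + Complex.I * α := by push_cast; ring
    rw [h1, Complex.exp_add, Complex.exp_int_mul_two_pi_mul_I, one_mul]
  have hinv : Complex.exp (-(Complex.I * α * x)) = (Complex.exp (Complex.I * α * x))⁻¹ := by
    rw [← Complex.exp_neg]
  rw [hsplit, hone, hinv]
  have hB : Complex.exp (Complex.I * α * x) ≠ 0 := Complex.exp_ne_zero _
  have hdn := hd n hn
  generalize Complex.exp (2 * Real.pi * Complex.I * n * x) = A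
  generalize hBdef : Complex.exp (Complex.I * ↑α * ↑x) = B at hB ⊢
  generalize Complex.exp (Complex.I * ↑α) = C
  generalize hddef : ((2 * Real.pi * n + α : ℝ) : ℂ) = d at hdn ⊢
  field_simp
  ring
end

section
/- Let α ∈ ℝ with α ∉ 2πℤ and let C ∈ ℂ be a constant. Then the unique continuous 1-periodic Ψ satisfying (i·Ψ(x)·e^{iαx})' = (1 − e^{iα})·C·e^{iαx} is the constant function Ψ(x) = −C·(1 − e^{iα})/α. -/
open Complex

theorem stmt8 (α : ℝ) (hα : ∀ n : ℤ, α ≠ 2 * Real.pi * n) (C : ℂ)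
    (Ψ : ℝ → ℂ) (hc : Continuous Ψ) (hp : ∀ x, Ψ (x + 1) = Ψ x)
    (hd : ∀ x : ℝ, HasDerivAt (fun y : ℝ => Complex.I * Ψ y * Complex.exp (Complex.I * α * y))
      ((1 - Complex.exp (Complex.I * α)) * C * Complex.exp (Complex.I * α * x)) x) :
    ∀ x : ℝ, Ψ x = -C * (1 - Complex.exp (Complex.I * α)) / (α : ℂ) := by
  have hα0 : (α : ℂ) ≠ 0 := by
    have h := hα 0
    push_cast at h
    simp only [mul_zero] at h
    exact_mod_cast h
  have he : Complex.exp (Complex.I * α) ≠ 1 := by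
    intro h
    rw [Complex.exp_eq_one_iff] at h
    obtain ⟨n, hn⟩ := h
    apply hα n
    have : (α : ℂ) = 2 * Real.pi * n := by
      linear_combination (-Complex.I) * hn + ((α:ℂ) - 2*Real.pi*n) * Complex.I_sq
    exact_mod_cast this
  set e := Complex.exp (Complex.I * α) with he_def
  set c : ℂ := (1 - e) * C / (Complex.I * α) with hc_def
  have hE : ∀ x : ℝ, HasDerivAt (fun y : ℝ => Complex.exp (Complex.I * α * y))
      (Complex.I * α * Complex.exp (Complex.I * α * x)) x := by
    intro x
    have h1 : HasDerivAt (fun y : ℝ => Complex.I * α * (y : ℂ)) (Complex.I * α) x := by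
      simpa using (Complex.ofRealCLM.hasDerivAt (x := x)).const_mul (Complex.I * α)
    simpa [mul_comm, Function.comp_def] using (Complex.hasDerivAt_exp (Complex.I * α * x)).comp x h1
  set g : ℝ → ℂ := fun y => Complex.I * Ψ y * Complex.exp (Complex.I * α * y)
      - c * Complex.exp (Complex.I * α * y) with hg_def
  have hg' : ∀ x : ℝ, HasDerivAt g 0 x := by
    intro x
    have := (hd x).sub ((hE x).const_mul c)
    convert this using 1
    · rfl
    · rfl
    rw [hc_def]
    field_simp
    ring
  have hgc : ∀ x : ℝ, g x = g 0 := fun x =>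
    is_const_of_deriv_eq_zero (fun y => (hg' y).differentiableAt)
      (fun y => (hg' y).deriv) x 0
  have hEx : ∀ x : ℝ, Complex.exp (Complex.I * α * x) ≠ 0 := fun x => Complex.exp_ne_zero _
  have h10 : Ψ 1 = Ψ 0 := by simpa using hp 0
  -- from g 1 = g 0, deduce I * Ψ 0 = c
  have key : Complex.I * Ψ 0 = c := by
    have h1 := hgc 1
    rw [hg_def] at h1
    simp only [Complex.ofReal_one, Complex.ofReal_zero, mul_one, mul_zero,
      Complex.exp_zero, h10, ← he_def] at h1
    have hfac : (e - 1) * (Complex.I * Ψ 0 - c) = 0 := by linear_combination h1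
    rcases mul_eq_zero.1 hfac with h | h
    · exact absurd (sub_eq_zero.1 h) he
    · exact sub_eq_zero.1 h
  intro x
  have hx := hgc x
  rw [hg_def] at hx
  simp only [Complex.ofReal_zero, mul_zero, Complex.exp_zero, mul_one] at hx
  have h0 : Complex.I * Ψ x * Complex.exp (Complex.I * α * x)
      - c * Complex.exp (Complex.I * α * x) = 0 := by
    rw [hx]; linear_combination key
  have hfac : Complex.exp (Complex.I * α * x) * (Complex.I * Ψ x - c) = 0 := by
    linear_combination h0
  have hΨ : Complex.I * Ψ x = c := by
    rcases mul_eq_zero.1 hfac with h | h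
    · exact absurd h (hEx x)
    · exact sub_eq_zero.1 h
  have hI : (Complex.I : ℂ) ≠ 0 := Complex.I_ne_zero
  rw [hc_def] at hΨ
  field_simp at hΨ
  rw [eq_div_iff hα0]
  linear_combination -hΨ + (Ψ x * (α:ℂ)) * Complex.I_sq
end

section
/- Suppose R : [x₀,∞) → (0,∞) is C¹ and (d/dx) log R(x) = −B(x)/x^{(p−1)γ} + r(x), where B is a continuous 1-periodic function with positive mean ℬ, γ ∈ (1/p, 1/(p−1)) for an integer p ≥ 2, and r ∈ L¹(x₀,∞). Then R(x) = A·exp(−ℬ·x^{1−(p−1)γ}/(1−(p−1)γ))·(1+o(1)) as x → ∞ for some constant A > 0; in particular R ∈ L²(x₀,∞). -/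
open Filter MeasureTheory Set

/-- A continuous periodic real function is bounded. -/
lemma aux_periodic_bound {C : ℝ → ℝ} (hc : Continuous C) (hp : Function.Periodic C 1) :
    ∃ M : ℝ, 0 ≤ M ∧ ∀ x, |C x| ≤ M := by
  have hb := hp.isBounded_of_continuous one_ne_zero hc
  obtain ⟨M, hM⟩ := (isBounded_iff_forall_norm_le).mp hb
  exact ⟨max M 0, le_max_right _ _, fun x =>
    le_trans (hM _ (mem_range_self x)) (le_max_left _ _)⟩

theorem stmt10 (p : ℕ) (hp : 2 ≤ p) (γ : ℝ)
    (hγ₁ : 1 / (p : ℝ) < γ) (hγ₂ : γ < 1 / ((p : ℝ) - 1))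
    (x₀ : ℝ) (hx₀ : 0 < x₀)
    (B : ℝ → ℝ) (hBc : Continuous B) (hBp : ∀ x, B (x + 1) = B x)
    (Bbar : ℝ) (hBbar : Bbar = ∫ t in (0:ℝ)..1, B t) (hBpos : 0 < Bbar)
    (r : ℝ → ℝ) (hr : MeasureTheory.IntegrableOn r (Set.Ioi x₀))
    (R : ℝ → ℝ) (hRpos : ∀ x, x₀ ≤ x → 0 < R x)
    (hR : ∀ x : ℝ, x₀ ≤ x →
      HasDerivAt (fun y => Real.log (R y)) (-B x / x ^ (((p : ℝ) - 1) * γ) + r x) x) :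
    (∃ A : ℝ, 0 < A ∧ Tendsto
      (fun x : ℝ => R x / Real.exp (-(Bbar / (1 - ((p : ℝ) - 1) * γ)) * x ^ (1 - ((p : ℝ) - 1) * γ)))
      atTop (nhds A)) ∧
    MeasureTheory.IntegrableOn (fun x => (R x) ^ 2) (Set.Ioi x₀) := by
  -- basic facts about the exponent
  have hp2 : (2:ℝ) ≤ (p:ℝ) := by exact_mod_cast hp
  have hp1 : (0:ℝ) < (p:ℝ) - 1 := by linarith
  set a : ℝ := ((p : ℝ) - 1) * γ with ha_def
  have hγpos : 0 < γ := lt_trans (by positivity) hγ₁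
  have ha0 : 0 < a := mul_pos hp1 hγpos
  have ha1 : a < 1 := by
    have h := (lt_div_iff₀ hp1).mp hγ₂
    nlinarith
  have h1a : 0 < 1 - a := by linarith
  set c : ℝ := Bbar / (1 - a) with hc_def
  have hcpos : 0 < c := div_pos hBpos h1a
  -- the antiderivative of B - Bbar
  set C : ℝ → ℝ := fun t => ∫ s in x₀..t, (B s - Bbar) with hC_def
  have hBBc : Continuous (fun s => B s - Bbar) := hBc.sub continuous_const
  have hCderiv : ∀ t, HasDerivAt C (B t - Bbar) t := fun t =>
    (hBBc.integral_hasStrictDerivAt x₀ t).hasDerivAt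
  have hCcont : Continuous C :=
    continuous_iff_continuousAt.mpr fun t => (hCderiv t).continuousAt
  have hBper : Function.Periodic B 1 := hBp
  have hCper : Function.Periodic C 1 := by
    intro t
    have h1 : ∫ s in t..t+1, (B s - Bbar) = 0 := by
      rw [intervalIntegral.integral_sub (hBc.intervalIntegrable _ _)
        (intervalIntegrable_const), hBper.intervalIntegral_add_eq t 0]
      simp [hBbar]
    have h2 : C (t+1) = C t + ∫ s in t..t+1, (B s - Bbar) :=
      (intervalIntegral.integral_add_adjacent_intervals
        (hBBc.intervalIntegrable _ _) (hBBc.intervalIntegrable _ _)).symm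
    rw [h2, h1, add_zero]
  obtain ⟨M, hM0, hM⟩ := aux_periodic_bound hCcont hCper
  have hCx₀ : C x₀ = 0 := intervalIntegral.integral_same
  -- the comparison function Ψ
  set Ψ : ℝ → ℝ := fun x => c * x ^ (1-a) + C x * x ^ (-a) with hΨ_def
  have hΨderiv : ∀ x, 0 < x →
      HasDerivAt Ψ (B x * x ^ (-a) - a * (C x * x ^ (-a-1))) x := by
    intro x hx
    have h1 : HasDerivAt (fun y : ℝ => y ^ (1-a)) ((1-a) * x ^ (1-a-1)) x :=
      Real.hasDerivAt_rpow_const (Or.inl (ne_of_gt hx))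
    have h2 : HasDerivAt (fun y : ℝ => y ^ (-a)) ((-a) * x ^ (-a-1)) x :=
      Real.hasDerivAt_rpow_const (Or.inl (ne_of_gt hx))
    have h3 := ((hCderiv x).mul h2)
    have h4 := (h1.const_mul c).add h3
    refine h4.congr_deriv ?_
    have e1 : 1 - a - 1 = -a := by ring
    rw [e1]
    have e2 : c * (1 - a) = Bbar := by
      rw [hc_def]; field_simp
    linear_combination (x ^ (-a)) * e2
  -- continuity facts on (0, ∞)
  have hrpow_cont : ∀ (q : ℝ), ContinuousOn (fun t : ℝ => t ^ q) {t : ℝ | 0 < t} := by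
    intro q t ht
    exact (Real.continuousAt_rpow_const t q (Or.inl (ne_of_gt ht))).continuousWithinAt
  have hg1cont : ContinuousOn (fun t : ℝ => B t * t ^ (-a)) {t : ℝ | 0 < t} :=
    hBc.continuousOn.mul (hrpow_cont (-a))
  have hg2cont : ContinuousOn (fun t : ℝ => C t * t ^ (-a-1)) {t : ℝ | 0 < t} :=
    hCcont.continuousOn.mul (hrpow_cont (-a-1))
  have hsub : ∀ x : ℝ, x₀ ≤ x → Set.uIcc x₀ x ⊆ {t : ℝ | 0 < t} := by
    intro x hx t ht
    rw [Set.uIcc_of_le hx] at ht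
    exact lt_of_lt_of_le hx₀ ht.1
  -- FTC for Ψ
  have hΨint : ∀ x, x₀ ≤ x → Ψ x - Ψ x₀ =
      (∫ t in x₀..x, B t * t ^ (-a)) - a * ∫ t in x₀..x, C t * t ^ (-a-1) := by
    intro x hx
    have hI1 : IntervalIntegrable (fun t => B t * t ^ (-a)) volume x₀ x :=
      (hg1cont.mono (hsub x hx)).intervalIntegrable
    have hI2 : IntervalIntegrable (fun t => C t * t ^ (-a-1)) volume x₀ x :=
      (hg2cont.mono (hsub x hx)).intervalIntegrable
    have hftc := intervalIntegral.integral_eq_sub_of_hasDerivAt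
      (f := Ψ) (f' := fun t => B t * t ^ (-a) - a * (C t * t ^ (-a-1)))
      (fun t ht => hΨderiv t (hsub x hx ht))
      (hI1.sub (hI2.const_mul a))
    rw [intervalIntegral.integral_sub hI1 (hI2.const_mul a),
      intervalIntegral.integral_const_mul] at hftc
    linarith [hftc]
  -- FTC for log R
  have hlogR : ∀ x, x₀ ≤ x → Real.log (R x) - Real.log (R x₀) =
      -(∫ t in x₀..x, B t * t ^ (-a)) + ∫ t in x₀..x, r t := by
    intro x hx
    have heq : Set.EqOn (fun t : ℝ => -B t / t ^ a + r t)
        (fun t : ℝ => -(B t * t ^ (-a)) + r t) (Set.uIcc x₀ x) := by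
      intro t ht
      have ht0 : 0 < t := hsub x hx ht
      simp only
      rw [Real.rpow_neg ht0.le, neg_div, div_eq_mul_inv]
    have hIr : IntervalIntegrable r volume x₀ x := by
      rw [intervalIntegrable_iff]
      refine hr.mono_set ?_
      rw [Set.uIoc_of_le hx]
      exact Set.Ioc_subset_Ioi_self
    have hI1 : IntervalIntegrable (fun t => B t * t ^ (-a)) volume x₀ x :=
      (hg1cont.mono (hsub x hx)).intervalIntegrable
    have hI1' : IntervalIntegrable (fun t => -(B t * t ^ (-a))) volume x₀ x := by
      exact hI1.neg
    have hI : IntervalIntegrable (fun t => -B t / t ^ a + r t) volume x₀ x := by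
      refine (hI1'.add hIr).congr ?_
      intro t ht
      beta_reduce
      rw [Set.uIoc_of_le hx] at ht
      have ht0 : 0 < t := lt_trans hx₀ ht.1
      rw [Real.rpow_neg ht0.le, div_eq_mul_inv]
      ring
    have hftc := intervalIntegral.integral_eq_sub_of_hasDerivAt
      (f := fun y => Real.log (R y)) (f' := fun t => -B t / t ^ a + r t)
      (fun t ht => hR t (by rw [Set.uIcc_of_le hx] at ht; exact ht.1)) hI
    rw [intervalIntegral.integral_congr heq] at hftc
    rw [intervalIntegral.integral_add hI1' hIr, intervalIntegral.integral_neg] at hftc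
    linarith [hftc]
  -- the key identity
  have hkey : ∀ x, x₀ ≤ x → Real.log (R x) + c * x ^ (1-a) =
      (Real.log (R x₀) + Ψ x₀) - C x * x ^ (-a)
        - a * (∫ t in x₀..x, C t * t ^ (-a-1)) + ∫ t in x₀..x, r t := by
    intro x hx
    have h1 := hΨint x hx
    have h2 := hlogR x hx
    have h3 : Ψ x = c * x ^ (1-a) + C x * x ^ (-a) := rfl
    linarith [h1, h2, h3]
  -- convergence of the pieces
  have hg2int : IntegrableOn (fun t => C t * t ^ (-a-1)) (Set.Ioi x₀) := by
    refine Integrable.mono'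
      (((integrableOn_Ioi_rpow_of_lt (show -a-1 < -1 by linarith) hx₀)).const_mul M) ?_ ?_
    · exact (hg2cont.mono (fun t ht => lt_trans hx₀ ht)).aestronglyMeasurable measurableSet_Ioi
    · filter_upwards [ae_restrict_mem measurableSet_Ioi] with t ht
      have ht0 : 0 < t := lt_trans hx₀ ht
      rw [Real.norm_eq_abs, abs_mul, abs_of_nonneg (Real.rpow_nonneg ht0.le _)]
      exact mul_le_mul_of_nonneg_right (hM t) (Real.rpow_nonneg ht0.le _)
  have hlim2 : Tendsto (fun x => ∫ t in x₀..x, C t * t ^ (-a-1)) atTop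
      (nhds (∫ t in Set.Ioi x₀, C t * t ^ (-a-1))) :=
    intervalIntegral_tendsto_integral_Ioi x₀ hg2int tendsto_id
  have hlimr : Tendsto (fun x => ∫ t in x₀..x, r t) atTop
      (nhds (∫ t in Set.Ioi x₀, r t)) :=
    intervalIntegral_tendsto_integral_Ioi x₀ hr tendsto_id
  have hlimC : Tendsto (fun x => C x * x ^ (-a)) atTop (nhds 0) := by
    have hg : Tendsto (fun x : ℝ => M * x ^ (-a)) atTop (nhds 0) := by
      have := (tendsto_rpow_neg_atTop ha0).const_mul M
      rwa [mul_zero] at this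
    refine squeeze_zero_norm' ?_ hg
    filter_upwards [eventually_gt_atTop (0:ℝ)] with x hx
    rw [Real.norm_eq_abs, abs_mul, abs_of_nonneg (Real.rpow_nonneg hx.le _)]
    exact mul_le_mul_of_nonneg_right (hM x) (Real.rpow_nonneg hx.le _)
  set L : ℝ := (Real.log (R x₀) + Ψ x₀) - 0
    - a * (∫ t in Set.Ioi x₀, C t * t ^ (-a-1)) + ∫ t in Set.Ioi x₀, r t with hL_def
  have hLtends : Tendsto (fun x => Real.log (R x) + c * x ^ (1-a)) atTop (nhds L) := by
    have h4 : Tendsto (fun x => (Real.log (R x₀) + Ψ x₀) - C x * x ^ (-a)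
        - a * (∫ t in x₀..x, C t * t ^ (-a-1)) + ∫ t in x₀..x, r t) atTop (nhds L) := by
      rw [hL_def]
      exact (((tendsto_const_nhds.sub hlimC).sub (hlim2.const_mul a)).add hlimr)
    refine h4.congr' ?_
    filter_upwards [eventually_ge_atTop x₀] with x hx
    exact (hkey x hx).symm
  -- the main limit
  have hexp : Tendsto (fun x => Real.exp (Real.log (R x) + c * x ^ (1-a))) atTop
      (nhds (Real.exp L)) := (Real.continuous_exp.tendsto _).comp hLtends
  have hmain : Tendsto (fun x : ℝ => R x / Real.exp (-c * x ^ (1-a))) atTop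
      (nhds (Real.exp L)) := by
    refine hexp.congr' ?_
    filter_upwards [eventually_ge_atTop x₀] with x hx
    rw [show Real.log (R x) + c * x ^ (1-a)
        = Real.log (R x) - (-c * x ^ (1-a)) by ring,
      Real.exp_sub, Real.exp_log (hRpos x hx)]
  constructor
  · exact ⟨Real.exp L, Real.exp_pos L, hmain⟩
  · -- square integrability
    have hlogcont : ContinuousOn (fun y => Real.log (R y)) (Set.Ici x₀) :=
      fun x hx => (hR x hx).continuousAt.continuousWithinAt
    have hRcont : ContinuousOn R (Set.Ici x₀) :=
      (Real.continuous_exp.comp_continuousOn hlogcont).congr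
        (fun x hx => (Real.exp_log (hRpos x hx)).symm)
    have hdecay : Tendsto (fun x : ℝ => x ^ (2:ℝ) * Real.exp (2*L + 2 - 2*c*x^(1-a)))
        atTop (nhds 0) := by
      have h0 : Tendsto (fun y : ℝ => y ^ (2/(1-a)) * Real.exp (-(2*c) * y)) atTop (nhds 0) :=
        tendsto_rpow_mul_exp_neg_mul_atTop_nhds_zero _ _ (by positivity)
      have h2 := h0.comp (tendsto_rpow_atTop h1a)
      have h3 : Tendsto (fun x : ℝ => x ^ (2:ℝ) * Real.exp (-(2*c) * x ^ (1-a)))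
          atTop (nhds 0) := by
        refine h2.congr' ?_
        filter_upwards [eventually_gt_atTop (0:ℝ)] with x hx
        simp only [Function.comp]
        rw [← Real.rpow_mul hx.le, show (1-a)*(2/(1-a)) = 2 by field_simp]
      have h4 := h3.const_mul (Real.exp (2*L + 2))
      rw [mul_zero] at h4
      refine h4.congr ?_
      intro x
      rw [show (2*L + 2 - 2*c*x^(1-a)) = (2*L+2) + (-(2*c) * x^(1-a)) by ring, Real.exp_add,
        mul_left_comm, ← Real.exp_add, ← Real.exp_add]
    have hev1 : ∀ᶠ x : ℝ in atTop, Real.log (R x) + c * x ^ (1-a) ≤ L + 1 :=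
      hLtends.eventually (eventually_le_nhds (lt_add_one L))
    have hev2 : ∀ᶠ x : ℝ in atTop, x ^ (2:ℝ) * Real.exp (2*L + 2 - 2*c*x^(1-a)) ≤ 1 :=
      hdecay.eventually (eventually_le_nhds one_pos)
    obtain ⟨X, hX⟩ := eventually_atTop.mp (hev1.and hev2)
    set Y := max X (max x₀ 1) with hY_def
    have hY0 : (0:ℝ) < Y :=
      lt_of_lt_of_le one_pos (le_trans (le_max_right x₀ 1) (le_max_right X _))
    have hYx₀ : x₀ ≤ Y := le_trans (le_max_left x₀ 1) (le_max_right X _)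
    have hbound : ∀ x, x ∈ Set.Ioi Y → R x ^ 2 ≤ x ^ (-2 : ℝ) := by
      intro x hx
      have hxY : Y < x := hx
      have hxX : X ≤ x := le_trans (le_max_left _ _) hxY.le
      have hx₀x : x₀ ≤ x := le_trans hYx₀ hxY.le
      have hx0 : 0 < x := lt_trans hY0 hxY
      obtain ⟨h1, h2⟩ := hX x hxX
      have hRle : R x ≤ Real.exp (L + 1 - c * x ^ (1-a)) := by
        rw [← Real.exp_log (hRpos x hx₀x)]
        exact Real.exp_le_exp.mpr (by linarith)
      have hR2 : R x ^ 2 ≤ Real.exp (2*L + 2 - 2*c*x^(1-a)) := by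
        calc R x ^ 2 ≤ (Real.exp (L + 1 - c * x ^ (1-a)))^2 :=
              pow_le_pow_left₀ (hRpos x hx₀x).le hRle 2
          _ = Real.exp (2*L + 2 - 2*c*x^(1-a)) := by
              rw [sq, ← Real.exp_add]; congr 1; ring
      have hx2 : (0:ℝ) < x ^ (2:ℝ) := Real.rpow_pos_of_pos hx0 2
      have h5 : x ^ (2:ℝ) * R x ^ 2 ≤ 1 :=
        le_trans (mul_le_mul_of_nonneg_left hR2 hx2.le) h2
      have h6 : R x ^ 2 = (x ^ (2:ℝ))⁻¹ * (x ^ (2:ℝ) * R x ^ 2) := by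
        field_simp
      rw [Real.rpow_neg hx0.le, h6]
      calc (x ^ (2:ℝ))⁻¹ * (x ^ (2:ℝ) * R x ^ 2) ≤ (x ^ (2:ℝ))⁻¹ * 1 :=
            mul_le_mul_of_nonneg_left h5 (inv_nonneg.mpr hx2.le)
        _ = (x ^ (2:ℝ))⁻¹ := mul_one _
    have hIoiY : IntegrableOn (fun x => R x ^ 2) (Set.Ioi Y) := by
      refine Integrable.mono'
        (integrableOn_Ioi_rpow_of_lt (show (-2:ℝ) < -1 by norm_num) hY0) ?_ ?_
      · exact ((hRcont.mono
          (Set.Ioi_subset_Ici_self.trans (Set.Ici_subset_Ici.mpr hYx₀))).pow 2).aestronglyMeasurable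
          measurableSet_Ioi
      · filter_upwards [ae_restrict_mem measurableSet_Ioi] with x hx
        rw [Real.norm_eq_abs, abs_of_nonneg (sq_nonneg _)]
        exact hbound x hx
    have hIoc : IntegrableOn (fun x => R x ^ 2) (Set.Ioc x₀ Y) := by
      have hc2 : ContinuousOn (fun x => R x ^ 2) (Set.Icc x₀ Y) :=
        (hRcont.mono Set.Icc_subset_Ici_self).pow 2
      exact (hc2.integrableOn_Icc).mono_set Set.Ioc_subset_Icc_self
    rw [← Set.Ioc_union_Ioi_eq_Ioi hYx₀]
    exact hIoc.union hIoiY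
end

section
/- Suppose R : [x₀,∞) → (0,∞) is C¹ and (d/dx) log R(x) = −B(x)/x + r(x), where B is a continuous 1-periodic function with mean ℬ > 0 and r ∈ L¹(x₀,∞). Then there exists A > 0 such that R(x) = A·x^{−ℬ}·(1+o(1)) as x → ∞. -/
open Filter MeasureTheory Set intervalIntegral

theorem stmt11 (x₀ : ℝ) (hx₀ : 1 < x₀)
    (B : ℝ → ℝ) (hBc : Continuous B) (hBp : ∀ x, B (x + 1) = B x)
    (Bbar : ℝ) (hBbar : Bbar = ∫ t in (0:ℝ)..1, B t) (hBpos : 0 < Bbar)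
    (r : ℝ → ℝ) (hr : MeasureTheory.IntegrableOn r (Set.Ioi x₀))
    (R : ℝ → ℝ) (hRpos : ∀ x, x₀ ≤ x → 0 < R x)
    (hR : ∀ x : ℝ, x₀ ≤ x → HasDerivAt (fun y => Real.log (R y)) (-B x / x + r x) x) :
    ∃ A : ℝ, 0 < A ∧ Tendsto (fun x : ℝ => x ^ Bbar * R x) atTop (nhds A) := by
  have hx₀0 : (0:ℝ) < x₀ := by linarith
  set g : ℝ → ℝ := fun t => Bbar - B t with hg_def
  have hgc : Continuous g := continuous_const.sub hBc
  have hgp : Function.Periodic g 1 := fun x => by simp [hg_def, hBp x]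
  have hg0 : (∫ t in (0:ℝ)..1, g t) = 0 := by
    rw [hg_def, intervalIntegral.integral_sub intervalIntegrable_const
      (hBc.intervalIntegrable 0 1)]
    simp [hBbar]
  set G : ℝ → ℝ := fun x => ∫ t in (0:ℝ)..x, g t with hG_def
  have hGderiv : ∀ x : ℝ, HasDerivAt G (g x) x := fun x =>
    intervalIntegral.integral_hasDerivAt_right (hgc.intervalIntegrable 0 x)
      (hgc.stronglyMeasurableAtFilter _ _) hgc.continuousAt
  have hGc : Continuous G := by
    have : Differentiable ℝ G := fun x => (hGderiv x).differentiableAt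
    exact this.continuous
  have hGper : Function.Periodic G 1 := by
    intro x
    have h1 : G (x + 1) = G x + ∫ t in x..x + 1, g t :=
      (intervalIntegral.integral_add_adjacent_intervals (hgc.intervalIntegrable 0 x)
        (hgc.intervalIntegrable x (x + 1))).symm
    have h2 : (∫ t in x..x + 1, g t) = ∫ t in (0:ℝ)..0 + 1, g t :=
      hgp.intervalIntegral_add_eq x 0
    rw [h1, h2]
    simpa using hg0
  -- bound on G
  obtain ⟨M, hM⟩ : ∃ M, ∀ y ∈ Icc (0:ℝ) 1, ‖G y‖ ≤ M :=
    isCompact_Icc.exists_bound_of_continuousOn hGc.continuousOn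
  have hMb : ∀ x : ℝ, |G x| ≤ M := by
    intro x
    have hfr : G (Int.fract x) = G x := by
      have h := hGper.sub_int_mul_eq (x := x) (n := ⌊x⌋)
      rw [mul_one, Int.self_sub_floor] at h
      exact h
    rw [← hfr]
    exact hM _ ⟨Int.fract_nonneg x, (Int.fract_lt_one x).le⟩
  have hM0 : 0 ≤ M := le_trans (abs_nonneg _) (hMb 0)
  -- integrability of r on intervals
  have hrint : ∀ x, x₀ ≤ x → IntervalIntegrable r volume x₀ x := by
    intro x hx
    rw [intervalIntegrable_iff_integrableOn_Ioc_of_le hx]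
    exact hr.mono_set Ioc_subset_Ioi_self
  -- integrability of G t / t^2 on Ioi x₀
  have hGt2int : IntegrableOn (fun t => G t / t ^ 2) (Ioi x₀) := by
    have hbase : IntegrableOn (fun t : ℝ => t ^ (-2 : ℝ)) (Ioi x₀) :=
      integrableOn_Ioi_rpow_of_lt (by norm_num) hx₀0
    have hbase' : IntegrableOn (fun t : ℝ => M * t ^ (-2 : ℝ)) (Ioi x₀) := hbase.const_mul M
    refine hbase'.mono' ?_ ?_
    · refine (ContinuousOn.aestronglyMeasurable ?_ measurableSet_Ioi)
      exact hGc.continuousOn.div (continuous_pow 2).continuousOn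
        (fun t ht => pow_ne_zero 2 (by have := lt_trans hx₀0 ht; linarith))
    · filter_upwards [ae_restrict_mem measurableSet_Ioi] with t ht
      have ht0 : (0:ℝ) < t := lt_trans hx₀0 ht
      have h2 : t ^ (-2 : ℝ) = (t ^ 2)⁻¹ := by
        rw [Real.rpow_neg ht0.le]
        norm_num [Real.rpow_natCast]
      rw [Real.norm_eq_abs, abs_div, abs_of_pos (pow_pos ht0 2), h2, div_eq_mul_inv]
      exact mul_le_mul_of_nonneg_right (hMb t) (by positivity)
  -- the main function φ
  set φ : ℝ → ℝ := fun x => Bbar * Real.log x + Real.log (R x) with hφ_def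
  have hφderiv : ∀ x, x₀ ≤ x → HasDerivAt φ (g x / x + r x) x := by
    intro x hx
    have hx0 : x ≠ 0 := ne_of_gt (lt_of_lt_of_le hx₀0 hx)
    have h1 : HasDerivAt (fun y => Bbar * Real.log y) (Bbar * x⁻¹) x :=
      (Real.hasDerivAt_log hx0).const_mul Bbar
    have h2 := h1.add (hR x hx)
    refine h2.congr_deriv ?_
    simp only [hg_def]
    ring
  -- auxiliary function u = G / id
  set u : ℝ → ℝ := fun t => G t / t with hu_def
  have huderiv : ∀ t, x₀ ≤ t → HasDerivAt u (g t / t - G t / t ^ 2) t := by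
    intro t ht
    have ht0 : t ≠ 0 := ne_of_gt (lt_of_lt_of_le hx₀0 ht)
    have h := (hGderiv t).div (hasDerivAt_id t) ht0
    refine h.congr_deriv ?_
    simp only [id]
    field_simp
  -- FTC identities
  have hkey : ∀ x, x₀ ≤ x → φ x = φ x₀ + (u x - u x₀) + (∫ t in x₀..x, G t / t ^ 2)
      + ∫ t in x₀..x, r t := by
    intro x hx
    have hmem : ∀ t ∈ uIcc x₀ x, x₀ ≤ t := by
      intro t ht
      rw [uIcc_of_le hx] at ht
      exact ht.1
    have hctn : ContinuousOn (fun t => g t / t) (uIcc x₀ x) :=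
      hgc.continuousOn.div continuousOn_id
        (fun t ht => ne_of_gt (lt_of_lt_of_le hx₀0 (hmem t ht)))
    have hctn2 : ContinuousOn (fun t => G t / t ^ 2) (uIcc x₀ x) :=
      hGc.continuousOn.div (continuous_pow 2).continuousOn
        (fun t ht => pow_ne_zero 2 (ne_of_gt (lt_of_lt_of_le hx₀0 (hmem t ht))))
    have hint1 : IntervalIntegrable (fun t => g t / t) volume x₀ x :=
      hctn.intervalIntegrable
    have hint2 : IntervalIntegrable (fun t => G t / t ^ 2) volume x₀ x :=
      hctn2.intervalIntegrable
    have hφeq : φ x - φ x₀ = ∫ t in x₀..x, (g t / t + r t) :=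
      (intervalIntegral.integral_eq_sub_of_hasDerivAt
        (fun t ht => hφderiv t (hmem t ht)) (hint1.add (hrint x hx))).symm
    have hueq : u x - u x₀ = ∫ t in x₀..x, (g t / t - G t / t ^ 2) :=
      (intervalIntegral.integral_eq_sub_of_hasDerivAt
        (fun t ht => huderiv t (hmem t ht)) (hint1.sub hint2)).symm
    rw [intervalIntegral.integral_add hint1 (hrint x hx)] at hφeq
    rw [intervalIntegral.integral_sub hint1 hint2] at hueq
    have := hφeq
    linarith [hφeq, hueq]
  -- limits
  have hulim : Tendsto u atTop (nhds 0) := by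
    have hbound : ∀ᶠ x in atTop, ‖u x‖ ≤ M / x := by
      filter_upwards [eventually_gt_atTop 0] with x hx
      rw [hu_def, Real.norm_eq_abs, abs_div, abs_of_pos hx]
      gcongr
      exact hMb x
    exact squeeze_zero_norm' hbound (tendsto_const_nhds.div_atTop tendsto_id)
  have hIlim : Tendsto (fun x => ∫ t in x₀..x, G t / t ^ 2) atTop
      (nhds (∫ t in Ioi x₀, G t / t ^ 2)) :=
    intervalIntegral_tendsto_integral_Ioi x₀ hGt2int tendsto_id
  have hrlim : Tendsto (fun x => ∫ t in x₀..x, r t) atTop (nhds (∫ t in Ioi x₀, r t)) :=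
    intervalIntegral_tendsto_integral_Ioi x₀ hr tendsto_id
  set L : ℝ := φ x₀ + (0 - u x₀) + (∫ t in Ioi x₀, G t / t ^ 2) + ∫ t in Ioi x₀, r t with hL_def
  have hφlim : Tendsto φ atTop (nhds L) := by
    have h : Tendsto (fun x => φ x₀ + (u x - u x₀) + (∫ t in x₀..x, G t / t ^ 2)
        + ∫ t in x₀..x, r t) atTop (nhds L) := by
      exact ((tendsto_const_nhds.add (hulim.sub tendsto_const_nhds)).add hIlim).add hrlim
    refine h.congr' ?_
    filter_upwards [eventually_ge_atTop x₀] with x hx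
    exact (hkey x hx).symm
  refine ⟨Real.exp L, Real.exp_pos L, ?_⟩
  have hexp : Tendsto (fun x => Real.exp (φ x)) atTop (nhds (Real.exp L)) :=
    (Real.continuous_exp.tendsto L).comp hφlim
  refine hexp.congr' ?_
  filter_upwards [eventually_ge_atTop x₀] with x hx
  have hx0 : (0:ℝ) < x := lt_of_lt_of_le hx₀0 hx
  rw [hφ_def]
  simp only []
  rw [Real.exp_add, Real.exp_log (hRpos x hx), Real.rpow_def_of_pos hx0]
  ring_nf
end
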